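/- Fix real parameters α, β, γ_r, γ_i, c, d, q, ρ and a > 0, and let Λ̂(k) be the associated symbol matrix. There exist constants δ_Λ ∈ (0,1) and c_{Λ,s} > 0 such that for every k ∈ ℝ with |k| < δ_Λ, the set of eigenvalues λ of Λ̂(k) with Re λ ≤ -c_{Λ,s} consists of exactly one element λ₁(k), and λ₁(k) is a simple root of the characteristic polynomial of Λ̂(k). -/

import Mathlib

/-- The Fourier symbol `Λ̂(k)` of the linearization of the modulation system about the wave
train, after the change of variables `ψ = √(1-∂ₓ²) v`. -/
noncomputable def symbolMatrix (α β γr γi c d a q ρ : ℝ) (k : ℝ) : Matrix (Fin 3) (Fin 3) ℂ :=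
  !![-(k : ℂ) ^ 2 - 2 * (Real.exp (2 * ρ) : ℂ) - 2 * Complex.I * (α : ℂ) * (q : ℂ) * (k : ℂ),
      (-(Complex.I * (α : ℂ) * (k : ℂ)) - 2 * (q : ℂ)) * (Real.sqrt (1 + k ^ 2) : ℂ),
      (γr : ℂ);
    (-(Complex.I * (α : ℂ) * (k : ℂ) ^ 3)
        - 2 * Complex.I * (β : ℂ) * (Real.exp (2 * ρ) : ℂ) * (k : ℂ)
        - 2 * (q : ℂ) * (k : ℂ) ^ 2) / (Real.sqrt (1 + k ^ 2) : ℂ),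
      -(k : ℂ) ^ 2 - 2 * Complex.I * (α : ℂ) * (q : ℂ) * (k : ℂ),
      Complex.I * (γi : ℂ) * (k : ℂ) / (Real.sqrt (1 + k ^ 2) : ℂ);
    2 * Complex.I * (d : ℂ) * (Real.exp (2 * ρ) : ℂ) * (k : ℂ),
      0,
      -(a : ℂ) * (k : ℂ) ^ 2 + Complex.I * (c : ℂ) * (k : ℂ)]


open Polynomial


noncomputable def coefA (α c a q ρ : ℝ) (k : ℝ) : ℂ :=
  -(((-(k : ℂ) ^ 2 - 2 * (Real.exp (2 * ρ) : ℂ) - 2 * Complex.I * α * q * k)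
    + (-(k : ℂ) ^ 2 - 2 * Complex.I * α * q * k)
    + (-(a:ℂ) * k ^ 2 + Complex.I * c * k)))

noncomputable def coefB (α β γr γi c d a q ρ : ℝ) (k : ℝ) : ℂ :=
  let f11 : ℂ := -(k : ℂ) ^ 2 - 2 * (Real.exp (2 * ρ) : ℂ) - 2 * Complex.I * α * q * k
  let g12 : ℂ := -(Complex.I * α * k) - 2 * q
  let f13 : ℂ := (γr : ℂ)
  let g21 : ℂ := -(Complex.I * α * (k:ℂ) ^ 3) - 2 * Complex.I * β * (Real.exp (2 * ρ) : ℂ) * k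
      - 2 * q * (k:ℂ) ^ 2
  let f22 : ℂ := -(k : ℂ) ^ 2 - 2 * Complex.I * α * q * k
  let f31 : ℂ := 2 * Complex.I * d * (Real.exp (2 * ρ) : ℂ) * k
  let f33 : ℂ := -(a:ℂ) * (k:ℂ) ^ 2 + Complex.I * c * k
  f11 * f22 + f11 * f33 + f22 * f33 - g12 * g21 - f13 * f31

noncomputable def coefC (α β γr γi c d a q ρ : ℝ) (k : ℝ) : ℂ :=
  let f11 : ℂ := -(k : ℂ) ^ 2 - 2 * (Real.exp (2 * ρ) : ℂ) - 2 * Complex.I * α * q * k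
  let g12 : ℂ := -(Complex.I * α * k) - 2 * q
  let f13 : ℂ := (γr : ℂ)
  let g21 : ℂ := -(Complex.I * α * (k:ℂ) ^ 3) - 2 * Complex.I * β * (Real.exp (2 * ρ) : ℂ) * k
      - 2 * q * (k:ℂ) ^ 2
  let f22 : ℂ := -(k : ℂ) ^ 2 - 2 * Complex.I * α * q * k
  let g23 : ℂ := Complex.I * γi * k
  let f31 : ℂ := 2 * Complex.I * d * (Real.exp (2 * ρ) : ℂ) * k
  let f33 : ℂ := -(a:ℂ) * (k:ℂ) ^ 2 + Complex.I * c * k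
  f13 * f22 * f31 + g12 * g21 * f33 - f11 * f22 * f33 - g12 * g23 * f31

lemma charpoly_eq (α β γr γi c d a q ρ : ℝ) (k : ℝ) :
    Matrix.charpoly (symbolMatrix α β γr γi c d a q ρ k)
      = X ^ 3 + C (coefA α c a q ρ k) * X ^ 2 + C (coefB α β γr γi c d a q ρ k) * X
        + C (coefC α β γr γi c d a q ρ k) := by
  have h0 : (0:ℝ) < Real.sqrt (1 + k ^ 2) := Real.sqrt_pos.mpr (by positivity)
  have hs : ((Real.sqrt (1 + k ^ 2) : ℝ) : ℂ) ≠ 0 := by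
    exact_mod_cast ne_of_gt h0
  apply Polynomial.funext
  intro z
  rw [Matrix.charpoly, Matrix.det_fin_three]
  simp only [Matrix.charmatrix_apply, symbolMatrix, Matrix.cons_val', Matrix.cons_val_zero,
    Matrix.cons_val_one, Matrix.head_cons, Matrix.empty_val', Matrix.cons_val_fin_one,
    Matrix.head_fin_const, Matrix.of_apply, Matrix.map_apply, Matrix.diagonal_apply,
    Matrix.cons_val_two, Matrix.tail_cons]
  simp [coefA, coefB, coefC, Matrix.one_apply, Fin.ext_iff, eval_add, eval_mul, eval_sub, eval_pow]
  field_simp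
  ring



lemma coefA_zero (α β γr γi c d a q ρ : ℝ) :
    coefA α c a q ρ 0 = ((2 * Real.exp (2 * ρ) : ℝ) : ℂ) := by
  simp [coefA]

lemma coefA_cont (α c a q ρ : ℝ) : Continuous (fun k : ℝ => coefA α c a q ρ k) := by
  unfold coefA; fun_prop

lemma coefB_zero (α β γr γi c d a q ρ : ℝ) : coefB α β γr γi c d a q ρ 0 = 0 := by
  simp [coefB]

lemma coefC_zero (α β γr γi c d a q ρ : ℝ) : coefC α β γr γi c d a q ρ 0 = 0 := by
  simp [coefC]

lemma coefB_cont (α β γr γi c d a q ρ : ℝ) :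
    Continuous (fun k : ℝ => coefB α β γr γi c d a q ρ k) := by
  unfold coefB; fun_prop

lemma coefC_cont (α β γr γi c d a q ρ : ℝ) :
    Continuous (fun k : ℝ => coefC α β γr γi c d a q ρ k) := by
  unfold coefC; fun_prop



/-- Localization of roots of a perturbed cubic `z³ + A z² + B z + C₀`
near `{-m, 0}` when the coefficients are close to those of `z³ + m z²`. -/
lemma cubic_root_loc (m : ℝ) (hm : 0 < m) (A B C0 z : ℂ)
    (hE : ‖(A - (m:ℂ))‖ + ‖B‖ + ‖C0‖
      < min (m/8) (min 1 ((m/4)^3/(m+3)^2)))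
    (hz : z^3 + A*z^2 + B*z + C0 = 0) :
    ‖z‖ < m/4 ∨ ‖(z + (m:ℂ))‖ < m/4 := by
  set aA := ‖(A - (m:ℂ))‖ with haA
  set aB := ‖B‖ with haB
  set aC := ‖C0‖ with haC
  set az := ‖z‖ with haz
  set aw := ‖(z + (m:ℂ))‖ with haw
  clear_value aA aB aC az aw
  have haA0 : 0 ≤ aA := haA ▸ norm_nonneg _
  have haB0 : 0 ≤ aB := haB ▸ norm_nonneg _
  have haC0 : 0 ≤ aC := haC ▸ norm_nonneg _
  have haz0 : 0 ≤ az := haz ▸ norm_nonneg _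
  have hw0 : 0 ≤ aw := haw ▸ norm_nonneg _
  have hE1 : aA + aB + aC < 1 := lt_of_lt_of_le hE ((min_le_right _ _).trans (min_le_left _ _))
  have hE2 : aA + aB + aC < (m/4)^3/(m+3)^2 :=
    lt_of_lt_of_le hE ((min_le_right _ _).trans (min_le_right _ _))
  have habsA : ‖A‖ ≤ m + aA := by
    calc ‖A‖ = ‖((A - (m:ℂ)) + (m:ℂ))‖ := by ring_nf
    _ ≤ ‖(A - (m:ℂ))‖ + ‖((m:ℂ))‖ := norm_add_le _ _
    _ = aA + m := by rw [← haA, Complex.norm_of_nonneg hm.le]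
    _ = m + aA := by ring
  -- a priori bound on the roots
  have hzR : az ≤ m + 3 := by
    by_contra hcon
    push_neg at hcon
    have h1 : az ^ 3 ≤ ‖A‖ * az ^ 2 + aB * az + aC := by
      have e : z ^ 3 = -(A*z^2 + B*z + C0) := by linear_combination hz
      calc az ^ 3 = ‖(z ^ 3)‖ := by rw [haz, norm_pow]
      _ = ‖(A*z^2 + B*z + C0)‖ := by rw [e, norm_neg]
      _ ≤ ‖(A*z^2)‖ + ‖(B*z)‖ + ‖C0‖ := by
          exact (norm_add_le _ _).trans
            (add_le_add_left (norm_add_le _ _) _)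
      _ = ‖A‖ * az ^ 2 + aB * az + aC := by
          rw [haB, haC, haz, norm_mul, norm_mul, norm_pow]
    have haz1 : 1 ≤ az := by linarith
    nlinarith [sq_nonneg az, mul_pos (by linarith : (0:ℝ) < az) (by linarith : (0:ℝ) < az)]
  -- main dichotomy
  by_contra hcon
  push_neg at hcon
  obtain ⟨h1, h2⟩ := hcon
  have e2 : z^2 * (z + (m:ℂ)) = -((A - (m:ℂ))*z^2 + B*z + C0) := by linear_combination hz
  have h3 : az ^ 2 * aw ≤ aA * az ^ 2 + aB * az + aC := by
    calc az ^ 2 * aw = ‖(z^2 * (z + (m:ℂ)))‖ := by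
          rw [haz, haw, norm_mul, norm_pow]
    _ = ‖((A - (m:ℂ))*z^2 + B*z + C0)‖ := by rw [e2, norm_neg]
    _ ≤ ‖((A - (m:ℂ))*z^2)‖ + ‖(B*z)‖ + ‖C0‖ :=
        (norm_add_le _ _).trans (add_le_add_left (norm_add_le _ _) _)
    _ = aA * az ^ 2 + aB * az + aC := by rw [haA, haB, haC, haz, norm_mul, norm_mul, norm_pow]
  have hRpos : (0:ℝ) < (m+3)^2 := by positivity
  have hmul : (aA + aB + aC) * (m+3)^2 < (m/4)^3 := by
    have h4 : (m/4)^3/(m+3)^2 * (m+3)^2 = (m/4)^3 := div_mul_cancel₀ _ (ne_of_gt hRpos)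
    calc (aA + aB + aC) * (m+3)^2 < ((m/4)^3/(m+3)^2) * (m+3)^2 :=
          mul_lt_mul_of_pos_right hE2 hRpos
    _ = (m/4)^3 := h4
  have s1 : (m/4)^2 ≤ az^2 := by nlinarith
  have c1 : (m/4)^3 ≤ az^2 * aw := by
    calc (m/4)^3 = (m/4)^2 * (m/4) := by ring
    _ ≤ az^2 * aw := mul_le_mul s1 h2 (by linarith) (sq_nonneg az)
  have hsq : az^2 ≤ (m+3)^2 := by nlinarith
  have hm3 : m+3 ≤ (m+3)^2 := by nlinarith
  have h1' : (1:ℝ) ≤ (m+3)^2 := by nlinarith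
  have c2 : aA*az^2 + aB*az + aC ≤ (aA+aB+aC)*(m+3)^2 := by
    have f1 : aA * az^2 ≤ aA * (m+3)^2 := mul_le_mul_of_nonneg_left hsq haA0
    have f2 : aB * az ≤ aB * (m+3) := mul_le_mul_of_nonneg_left hzR haB0
    have f3 : aB * (m+3) ≤ aB * (m+3)^2 := mul_le_mul_of_nonneg_left hm3 haB0
    have f4 : aC * 1 ≤ aC * (m+3)^2 := mul_le_mul_of_nonneg_left h1' haC0
    have expand : (aA+aB+aC)*(m+3)^2 = aA*(m+3)^2 + aB*(m+3)^2 + aC*(m+3)^2 := by ring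
    rw [expand]
    linarith
  linarith [c1, h3, c2, hmul]


/-- Spectral separation at low frequencies: there are `δ_Λ ∈ (0,1)` and
`c_{Λ,s} > 0` such that for all `|k| < δ_Λ` the set of eigenvalues `λ` of `Λ̂(k)` with
`Re λ ≤ -c_{Λ,s}` consists of exactly one element `λ₁(k)`, which is a simple root of the
characteristic polynomial of `Λ̂(k)`. -/
theorem symbol_low_frequency_spectral_gap (α β γr γi c d a q ρ : ℝ) (ha : 0 < a) :
    ∃ δΛ : ℝ, δΛ ∈ Set.Ioo (0:ℝ) 1 ∧
      ∃ cs : ℝ, 0 < cs ∧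
        ∀ k : ℝ, |k| < δΛ →
          ∃ lam1 : ℂ,
            (Matrix.charpoly (symbolMatrix α β γr γi c d a q ρ k)).IsRoot lam1 ∧
            lam1.re ≤ -cs ∧
            Polynomial.rootMultiplicity lam1
              (Matrix.charpoly (symbolMatrix α β γr γi c d a q ρ k)) = 1 ∧
            ∀ mu : ℂ,
              (Matrix.charpoly (symbolMatrix α β γr γi c d a q ρ k)).IsRoot mu →
              mu.re ≤ -cs → mu = lam1 := by
  classical
  set m : ℝ := 2 * Real.exp (2 * ρ) with hm_def
  have hm : 0 < m := by positivity
  set ε₀ : ℝ := min (m/8) (min 1 ((m/4)^3/(m+3)^2)) with hε₀def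
  have hε₀ : 0 < ε₀ := lt_min (by positivity) (lt_min one_pos (by positivity))
  -- continuity of the coefficient error
  set F : ℝ → ℝ := fun k => ‖(coefA α c a q ρ k - (m:ℂ))‖
      + ‖(coefB α β γr γi c d a q ρ k)‖
      + ‖(coefC α β γr γi c d a q ρ k)‖ with hFdef
  have hFcont : Continuous F := by
    apply Continuous.add
    apply Continuous.add
    · exact continuous_norm.comp ((coefA_cont α c a q ρ).sub continuous_const)
    · exact continuous_norm.comp (coefB_cont α β γr γi c d a q ρ)
    · exact continuous_norm.comp (coefC_cont α β γr γi c d a q ρ)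
  have hF0 : F 0 = 0 := by
    simp [hFdef, coefA_zero α β γr γi c d a q ρ, coefB_zero, coefC_zero, ← hm_def]
  obtain ⟨δ, hδpos, hδ⟩ := Metric.continuousAt_iff.mp hFcont.continuousAt ε₀ hε₀
  refine ⟨min δ (1/2), ⟨lt_min hδpos (by norm_num), lt_of_le_of_lt (min_le_right _ _) (by norm_num)⟩,
    m/2, by positivity, ?_⟩
  intro k hk
  -- the coefficient error at k is small
  have hFk : F k < ε₀ := by
    have h1 : dist k 0 < δ := by
      rw [Real.dist_eq, sub_zero]
      exact lt_of_lt_of_le hk (min_le_left _ _)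
    have := hδ h1
    rw [Real.dist_eq, hF0, sub_zero] at this
    calc F k ≤ |F k| := le_abs_self _
    _ < ε₀ := this
  set A : ℂ := coefA α c a q ρ k with hA
  set B : ℂ := coefB α β γr γi c d a q ρ k with hB
  set C0 : ℂ := coefC α β γr γi c d a q ρ k with hC0
  set p : ℂ[X] := Matrix.charpoly (symbolMatrix α β γr γi c d a q ρ k) with hp
  have hpeq : p = X ^ 3 + C A * X ^ 2 + C B * X + C C0 := charpoly_eq α β γr γi c d a q ρ k
  have hpmonic : p.Monic := Matrix.charpoly_monic _
  have hpne : p ≠ 0 := hpmonic.ne_zero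
  have hdeg : p.natDegree = 3 := by
    rw [hp, Matrix.charpoly_natDegree_eq_dim]
    simp
  have hsplits : p.Splits := splits_iff_card_roots.mpr IsAlgClosed.card_roots_eq_natDegree
  have hcard : Multiset.card p.roots = 3 := (splits_iff_card_roots.mp hsplits).trans hdeg
  have hsum : p.roots.sum = -A := by
    have h1 := hsplits.nextCoeff_eq_neg_sum_roots_of_monic hpmonic
    have h2 : p.nextCoeff = A := by
      rw [nextCoeff_of_natDegree_pos (by rw [hdeg]; norm_num), hdeg, hpeq]
      simp [coeff_X_pow, coeff_C]
    rw [h2] at h1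
    rw [h1, neg_neg]
  -- each root satisfies the cubic equation
  have hroot_eq : ∀ z ∈ p.roots, z ^ 3 + A * z ^ 2 + B * z + C0 = 0 := by
    intro z hz
    have h1 : p.eval z = 0 := (Polynomial.mem_roots'.mp hz).2
    rw [hpeq] at h1
    simpa using h1
  have hdich : ∀ z ∈ p.roots, ‖z‖ < m/4 ∨ ‖(z + (m:ℂ))‖ < m/4 :=
    fun z hz => cubic_root_loc m hm A B C0 z hFk (hroot_eq z hz)
  -- split the roots
  set S1 : Multiset ℂ := p.roots.filter (fun z => ‖(z + (m:ℂ))‖ < m/4) with hS1def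
  set S2 : Multiset ℂ := p.roots.filter (fun z => ¬ ‖(z + (m:ℂ))‖ < m/4) with hS2def
  have hsplit : S1 + S2 = p.roots := Multiset.filter_add_not _ _
  have hmemS1 : ∀ z ∈ S1, -(5*m/4) ≤ z.re ∧ z.re ≤ -(3*m/4) := by
    intro z hz
    have h1 : ‖(z + (m:ℂ))‖ < m/4 := (Multiset.mem_filter.mp hz).2
    have h2 : |(z + (m:ℂ)).re| ≤ ‖(z + (m:ℂ))‖ := Complex.abs_re_le_norm _
    rw [Complex.add_re, Complex.ofReal_re] at h2
    rw [abs_le] at h2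
    constructor <;> linarith [h2.1, h2.2]
  have hmemS2 : ∀ z ∈ S2, -(m/4) ≤ z.re ∧ z.re ≤ m/4 := by
    intro z hz
    have h1 := (Multiset.mem_filter.mp hz).1
    have h2 := (Multiset.mem_filter.mp hz).2
    have h3 : ‖z‖ < m/4 := (hdich z h1).resolve_right h2
    have h4 : |z.re| ≤ ‖z‖ := Complex.abs_re_le_norm _
    rw [abs_le] at h4
    constructor <;> linarith [h4.1, h4.2]
  -- real parts
  have hre_sum : ((p.roots).map Complex.re).sum = -A.re := by
    have h0 : ((p.roots).map Complex.re).sum = (p.roots.sum).re := by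
      rw [← Complex.coe_reAddGroupHom]
      exact (map_multiset_sum Complex.reAddGroupHom _).symm
    rw [h0, hsum, Complex.neg_re]
  have hAre : |A.re - m| < ε₀ := by
    have h1 : ‖(A - (m:ℂ))‖ < ε₀ := by
      have := hFk
      rw [hFdef] at this
      have h2 : 0 ≤ ‖B‖ := norm_nonneg _
      have h3 : 0 ≤ ‖C0‖ := norm_nonneg _
      simp only at this
      linarith [this]
    calc |A.re - m| = |(A - (m:ℂ)).re| := by rw [Complex.sub_re, Complex.ofReal_re]
    _ ≤ ‖(A - (m:ℂ))‖ := Complex.abs_re_le_norm _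
    _ < ε₀ := h1
  have hε₀m : ε₀ ≤ m/8 := min_le_left _ _
  -- card of S1 is 1
  have hcards : Multiset.card S1 + Multiset.card S2 = 3 := by
    rw [← Multiset.card_add, hsplit, hcard]
  have hresplit : ((S1.map Complex.re).sum + (S2.map Complex.re).sum) = -A.re := by
    rw [← Multiset.sum_add, ← Multiset.map_add, hsplit, hre_sum]
  have hub1 : (S1.map Complex.re).sum ≤ (Multiset.card S1 : ℝ) * (-(3*m/4)) := by
    have := Multiset.sum_le_card_nsmul (S1.map Complex.re) (-(3*m/4)) ?_
    · rwa [Multiset.card_map, nsmul_eq_mul] at this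
    · intro x hx
      obtain ⟨z, hz, rfl⟩ := Multiset.mem_map.mp hx
      exact (hmemS1 z hz).2
  have hlb1 : (Multiset.card S1 : ℝ) * (-(5*m/4)) ≤ (S1.map Complex.re).sum := by
    have := Multiset.card_nsmul_le_sum (s := S1.map Complex.re) (a := -(5*m/4)) ?_
    · rwa [Multiset.card_map, nsmul_eq_mul] at this
    · intro x hx
      obtain ⟨z, hz, rfl⟩ := Multiset.mem_map.mp hx
      exact (hmemS1 z hz).1
  have hub2 : (S2.map Complex.re).sum ≤ (Multiset.card S2 : ℝ) * (m/4) := by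
    have := Multiset.sum_le_card_nsmul (S2.map Complex.re) (m/4) ?_
    · rwa [Multiset.card_map, nsmul_eq_mul] at this
    · intro x hx
      obtain ⟨z, hz, rfl⟩ := Multiset.mem_map.mp hx
      exact (hmemS2 z hz).2
  have hlb2 : (Multiset.card S2 : ℝ) * (-(m/4)) ≤ (S2.map Complex.re).sum := by
    have := Multiset.card_nsmul_le_sum (s := S2.map Complex.re) (a := -(m/4)) ?_
    · rwa [Multiset.card_map, nsmul_eq_mul] at this
    · intro x hx
      obtain ⟨z, hz, rfl⟩ := Multiset.mem_map.mp hx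
      exact (hmemS2 z hz).1
  have habs := abs_lt.mp hAre
  have hn1 : Multiset.card S1 = 1 := by
    have h3 : Multiset.card S1 ≤ 3 := by omega
    interval_cases h : Multiset.card S1
    · -- 0 roots near -m : impossible
      exfalso
      have h2 : Multiset.card S2 = 3 := by omega
      rw [h2] at hub2 hlb2
      push_cast at hub1 hlb1 hub2 hlb2
      linarith
    · rfl
    · exfalso
      have h2 : Multiset.card S2 = 1 := by omega
      rw [h2] at hub2 hlb2
      push_cast at hub1 hlb1 hub2 hlb2
      linarith
    · exfalso
      have h2 : Multiset.card S2 = 0 := by omega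
      rw [h2] at hub2 hlb2
      push_cast at hub1 hlb1 hub2 hlb2
      linarith
  obtain ⟨lam1, hlam1⟩ := Multiset.card_eq_one.mp hn1
  have hlam1S1 : lam1 ∈ S1 := by rw [hlam1]; exact Multiset.mem_singleton_self _
  have hlam1near : ‖(lam1 + (m:ℂ))‖ < m/4 := (Multiset.mem_filter.mp hlam1S1).2
  have hlam1roots : lam1 ∈ p.roots := (Multiset.mem_filter.mp hlam1S1).1
  refine ⟨lam1, (Polynomial.mem_roots'.mp hlam1roots).2, ?_, ?_, ?_⟩
  · have := (hmemS1 lam1 hlam1S1).2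
    linarith
  · rw [← Polynomial.count_roots, ← hsplit, Multiset.count_add, hlam1,
      Multiset.count_singleton_self]
    have : lam1 ∉ S2 := by
      intro hcon
      exact (Multiset.mem_filter.mp hcon).2 hlam1near
    rw [Multiset.count_eq_zero.mpr this]
  · intro mu hmuroot hmure
    have hmuS : mu ∈ p.roots := Polynomial.mem_roots'.mpr ⟨hpne, hmuroot⟩
    have h1 : ‖(mu + (m:ℂ))‖ < m/4 := by
      rcases hdich mu hmuS with h | h
      · exfalso
        have h4 : |mu.re| ≤ ‖mu‖ := Complex.abs_re_le_norm _
        rw [abs_le] at h4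
        linarith [h4.1]
      · exact h
    have hmuS1 : mu ∈ S1 := Multiset.mem_filter.mpr ⟨hmuS, h1⟩
    rw [hlam1] at hmuS1
    exact Multiset.mem_singleton.mp hmuS1
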